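/- For 0 < γ < 1, the function β ↦ z_R(β, γ) = (1-β)^{1-β} * (β + γ(1-β))^{β+γ(1-β)} / (γ(1-β))^{γ(1-β)} on (0,1) attains its minimum at β*(γ) = ((1/γ)^{γ/(1-γ)} - γ) / ((1/γ)^{γ/(1-γ)} - γ + 1). -/

import Mathlib

open Real

/-- `z_R(β,γ) = (1-β)^{1-β} (β+γ(1-β))^{β+γ(1-β)} / (γ(1-β))^{γ(1-β)}` (real powers). -/
noncomputable def zR (β γ : ℝ) : ℝ :=
  (1 - β) ^ (1 - β) * (β + γ * (1 - β)) ^ (β + γ * (1 - β)) / (γ * (1 - β)) ^ (γ * (1 - β))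

/-- `β*(γ) = ((1/γ)^{γ/(1-γ)} - γ) / ((1/γ)^{γ/(1-γ)} - γ + 1)`. -/
noncomputable def βstar (γ : ℝ) : ℝ :=
  ((1 / γ) ^ (γ / (1 - γ)) - γ) / ((1 / γ) ^ (γ / (1 - γ)) - γ + 1)

/-- Tangent line inequality for the convex function `x ↦ x log x`. -/
lemma tangent_xlogx {x y : ℝ} (hx : 0 < x) (hy : 0 < y) :
    y * Real.log y + (1 + Real.log y) * (x - y) ≤ x * Real.log x := by
  have h := Real.log_le_sub_one_of_pos (div_pos hy hx)
  rw [Real.log_div hy.ne' hx.ne'] at h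
  have h2 : x * (Real.log y - Real.log x) ≤ x * (y / x - 1) :=
    mul_le_mul_of_nonneg_left h hx.le
  have h3 : x * (y / x - 1) = y - x := by field_simp
  nlinarith [h2, h3]

/-- `zR β γ = exp(G(1-β))` where `G u = (1-γ) u log u - γ log γ · u + s log s`,
`s = 1-(1-γ)u`. -/
lemma zR_eq (γ β : ℝ) (hγ0 : 0 < γ) (hβ0 : 0 < β) (hβ1 : β < 1) :
    zR β γ = Real.exp ((1 - γ) * ((1 - β) * Real.log (1 - β)) +
      (-γ * Real.log γ) * (1 - β) +
      (1 - (1 - γ) * (1 - β)) * Real.log (1 - (1 - γ) * (1 - β))) := by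
  have hu : (0:ℝ) < 1 - β := by linarith
  have hs : (0:ℝ) < β + γ * (1 - β) := by positivity
  have ht : (0:ℝ) < γ * (1 - β) := by positivity
  unfold zR
  rw [Real.rpow_def_of_pos hu, Real.rpow_def_of_pos hs, Real.rpow_def_of_pos ht,
    ← Real.exp_add, ← Real.exp_sub]
  congr 1
  have h1 : 1 - (1 - γ) * (1 - β) = β + γ * (1 - β) := by ring
  rw [h1, Real.log_mul hγ0.ne' hu.ne']
  ring

/-- For `0 < γ < 1`, the function `β ↦ z_R(β,γ)` on `(0,1)` attains its minimum at
`β = β*(γ)`. -/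
theorem stmt8 (γ : ℝ) (hγ : γ ∈ Set.Ioo (0:ℝ) 1) :
    βstar γ ∈ Set.Ioo (0:ℝ) 1 ∧ ∀ β ∈ Set.Ioo (0:ℝ) 1, zR (βstar γ) γ ≤ zR β γ := by
  obtain ⟨hγ0, hγ1⟩ := hγ
  set A : ℝ := (1 / γ) ^ (γ / (1 - γ)) with hAdef
  have hA1 : 1 < A := by
    apply Real.one_lt_rpow_iff_of_pos (by positivity) |>.2
    left
    constructor
    · rw [lt_div_iff₀ hγ0]; linarith
    · apply div_pos hγ0; linarith
  have hD : (0:ℝ) < A - γ + 1 := by linarith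
  have hβeq : βstar γ = (A - γ) / (A - γ + 1) := rfl
  have hβ0 : 0 < βstar γ := by
    rw [hβeq]; apply div_pos (by linarith) hD
  have hβ1 : βstar γ < 1 := by
    rw [hβeq, div_lt_one hD]; linarith
  refine ⟨⟨hβ0, hβ1⟩, ?_⟩
  intro β hβ
  obtain ⟨hb0, hb1⟩ := hβ
  rw [zR_eq γ β hγ0 hb0 hb1, zR_eq γ (βstar γ) hγ0 hβ0 hβ1, Real.exp_le_exp]
  set u₀ : ℝ := 1 - βstar γ with hu0def
  set u : ℝ := 1 - β with hudef
  set s₀ : ℝ := 1 - (1 - γ) * u₀ with hs0def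
  set s : ℝ := 1 - (1 - γ) * u with hsdef
  have hu0 : 0 < u₀ := by rw [hu0def]; linarith
  have hu : 0 < u := by rw [hudef]; linarith
  have hu0eq : u₀ = 1 / (A - γ + 1) := by
    rw [hu0def, hβeq]; field_simp; ring
  have hs0eq : s₀ = A * u₀ := by
    rw [hs0def, hu0eq]; field_simp; ring
  have hs0 : 0 < s₀ := by rw [hs0eq]; positivity
  have hu1 : u < 1 := by rw [hudef]; linarith
  have hs : 0 < s := by
    have h : (1 - γ) * u < 1 := by nlinarith
    rw [hsdef]; linarith
  -- critical point condition
  have hlogA : Real.log A = (γ / (1 - γ)) * Real.log (1 / γ) := by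
    rw [hAdef, Real.log_rpow (by positivity)]
  have hlog1γ : Real.log (1 / γ) = -Real.log γ := by
    rw [one_div, Real.log_inv]
  have hcrit : (1 - γ) * (Real.log u₀ - Real.log s₀) - γ * Real.log γ = 0 := by
    have h1γ : (1:ℝ) - γ ≠ 0 := by linarith
    rw [hs0eq, Real.log_mul (by positivity) hu0.ne', hlogA, hlog1γ]
    field_simp
    ring
  -- tangent line inequalities
  have hγ' : (0:ℝ) ≤ 1 - γ := by linarith
  have h1 := mul_le_mul_of_nonneg_left (tangent_xlogx hu hu0) hγ'
  have h2 := tangent_xlogx hs hs0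
  have hss : s - s₀ = -((1 - γ) * (u - u₀)) := by rw [hsdef, hs0def]; ring
  rw [hss] at h2
  have hzero : (1 - γ) * ((1 + Real.log u₀) * (u - u₀)) + (-γ * Real.log γ) * (u - u₀)
      + (1 + Real.log s₀) * (-((1 - γ) * (u - u₀))) = 0 := by
    linear_combination (u - u₀) * hcrit
  nlinarith [h1, h2, hzero]
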